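/- arXiv:2210.07777 — 4 statements merged into one kernel-verified Lean document; each statement's English description precedes it below -/
import Mathlib

section
/- For independent random variables A and B on a finite set Ω with i.i.d. copies A' and B', the discrete energy distance ε(A,B) = 2·P(A≠B) − P(A≠A') − P(B≠B') is nonnegative, and ε(A,B) = 0 if and only if A and B have the same distribution. -/
open MeasureTheory ProbabilityTheory

lemma ne_prob_aux {Ω₀ Ω : Type*} [MeasurableSpace Ω₀] [Fintype Ω]
    [MeasurableSpace Ω] [MeasurableSingletonClass Ω]
    (μ : Measure Ω₀) [IsProbabilityMeasure μ]
    (X Y : Ω₀ → Ω) (hX : Measurable X) (hY : Measurable Y)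
    (h : IndepFun X Y μ) :
    (μ {ω | X ω ≠ Y ω}).toReal
      = 1 - ∑ x : Ω, (μ.map X {x}).toReal * (μ.map Y {x}).toReal := by
  have hset : {ω | X ω = Y ω} = ⋃ x : Ω, X ⁻¹' {x} ∩ Y ⁻¹' {x} := by
    ext ω; simp only [Set.mem_setOf_eq, Set.mem_iUnion, Set.mem_inter_iff,
      Set.mem_preimage, Set.mem_singleton_iff]
    constructor
    · intro hxy; exact ⟨Y ω, hxy, rfl⟩
    · rintro ⟨x, h1, h2⟩; rw [h1, h2]
  have hmeas : MeasurableSet {ω | X ω = Y ω} := by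
    rw [hset]
    exact MeasurableSet.iUnion fun x =>
      ((hX (measurableSet_singleton x)).inter (hY (measurableSet_singleton x)))
  have hEq : μ {ω | X ω = Y ω} = ∑ x : Ω, μ (X ⁻¹' {x}) * μ (Y ⁻¹' {x}) := by
    rw [hset, measure_iUnion ?_ fun x =>
      ((hX (measurableSet_singleton x)).inter (hY (measurableSet_singleton x))), tsum_fintype]
    · exact Finset.sum_congr rfl fun x _ =>
        h.measure_inter_preimage_eq_mul _ _ (measurableSet_singleton x) (measurableSet_singleton x)
    · intro i j hij
      simp only [Function.onFun, Set.disjoint_left]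
      rintro ω ⟨h1, h2⟩ ⟨h3, h4⟩
      exact hij (h1.symm.trans h3)
  have hcompl : {ω | X ω ≠ Y ω} = {ω | X ω = Y ω}ᶜ := rfl
  rw [hcompl, measure_compl hmeas (measure_ne_top μ _), measure_univ, hEq,
    ENNReal.toReal_sub_of_le (by rw [← hEq]; exact prob_le_one) ENNReal.one_ne_top,
    ENNReal.toReal_one,
    ENNReal.toReal_sum fun x _ => ENNReal.mul_ne_top (measure_ne_top μ _) (measure_ne_top μ _)]
  congr 1
  exact Finset.sum_congr rfl fun x _ => by
    rw [ENNReal.toReal_mul, Measure.map_apply hX (measurableSet_singleton x),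
      Measure.map_apply hY (measurableSet_singleton x)]

/-- For mutually independent random variables `A, B, A', B'` on a finite set `Ω`,
with `A'` an i.i.d. copy of `A` and `B'` an i.i.d. copy of `B`, the discrete energy
distance `ε(A,B) = 2·P(A ≠ B) − P(A ≠ A') − P(B ≠ B')` is nonnegative, and it is
zero iff `A` and `B` have the same distribution. -/
theorem stmt_2 {Ω₀ Ω : Type*} [MeasurableSpace Ω₀] [Fintype Ω]
    [MeasurableSpace Ω] [MeasurableSingletonClass Ω]
    (μ : Measure Ω₀) [IsProbabilityMeasure μ]
    (A B A' B' : Ω₀ → Ω)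
    (hA : Measurable A) (hB : Measurable B) (hA' : Measurable A') (hB' : Measurable B')
    (hindep : iIndepFun ![A, B, A', B'] μ)
    (hAA' : Measure.map A' μ = Measure.map A μ)
    (hBB' : Measure.map B' μ = Measure.map B μ) :
    0 ≤ 2 * (μ {ω | A ω ≠ B ω}).toReal - (μ {ω | A ω ≠ A' ω}).toReal
        - (μ {ω | B ω ≠ B' ω}).toReal
    ∧ (2 * (μ {ω | A ω ≠ B ω}).toReal - (μ {ω | A ω ≠ A' ω}).toReal
        - (μ {ω | B ω ≠ B' ω}).toReal = 0 ↔ Measure.map A μ = Measure.map B μ) := by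
  have hAB : IndepFun A B μ := by
    have := hindep.indepFun (i := 0) (j := 1) (by decide)
    simpa using this
  have hAA'i : IndepFun A A' μ := by
    have := hindep.indepFun (i := 0) (j := 2) (by decide)
    simpa using this
  have hBB'i : IndepFun B B' μ := by
    have := hindep.indepFun (i := 1) (j := 3) (by decide)
    simpa using this
  have hmA : IsProbabilityMeasure (μ.map A) := Measure.isProbabilityMeasure_map hA.aemeasurable
  have hmB : IsProbabilityMeasure (μ.map B) := Measure.isProbabilityMeasure_map hB.aemeasurable
  set p : Ω → ℝ := fun x => (μ.map A {x}).toReal with hp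
  set q : Ω → ℝ := fun x => (μ.map B {x}).toReal with hq
  have e1 : (μ {ω | A ω ≠ B ω}).toReal = 1 - ∑ x : Ω, p x * q x :=
    ne_prob_aux μ A B hA hB hAB
  have e2 : (μ {ω | A ω ≠ A' ω}).toReal = 1 - ∑ x : Ω, p x * p x := by
    have := ne_prob_aux μ A A' hA hA' hAA'i
    rw [hAA'] at this
    exact this
  have e3 : (μ {ω | B ω ≠ B' ω}).toReal = 1 - ∑ x : Ω, q x * q x := by
    have := ne_prob_aux μ B B' hB hB' hBB'i
    rw [hBB'] at this
    exact this
  have key : 2 * (μ {ω | A ω ≠ B ω}).toReal - (μ {ω | A ω ≠ A' ω}).toReal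
      - (μ {ω | B ω ≠ B' ω}).toReal = ∑ x : Ω, (p x - q x) ^ 2 := by
    rw [e1, e2, e3]
    have h2 : ∑ x : Ω, (p x - q x) ^ 2
        = (∑ x : Ω, p x * p x + ∑ x : Ω, q x * q x) - 2 * ∑ x : Ω, p x * q x := by
      rw [Finset.mul_sum, ← Finset.sum_add_distrib, ← Finset.sum_sub_distrib]
      exact Finset.sum_congr rfl fun x _ => by ring
    rw [h2]; ring
  rw [key]
  refine ⟨Finset.sum_nonneg fun x _ => sq_nonneg _, ?_, ?_⟩
  · intro h
    have hz := (Finset.sum_eq_zero_iff_of_nonneg fun x _ => sq_nonneg _).mp h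
    apply Measure.ext_of_singleton
    intro x
    have h0 := hz x (Finset.mem_univ x)
    have hpq : p x = q x := by
      have := pow_eq_zero_iff (n := 2) (by norm_num) |>.mp h0
      linarith [sub_eq_zero.mp this]
    exact (ENNReal.toReal_eq_toReal_iff' (measure_ne_top _ _) (measure_ne_top _ _)).mp hpq
  · intro h
    apply Finset.sum_eq_zero
    intro x _
    simp [hp, hq, h]
end

section
/- Let A and B be independent random variables on a finite set Ω with probability mass functions p and q, and let g, f : Ω → [0,1]. Then E[|g(A) − f(A)|] − E[|g(B) − f(B)|] ≤ sqrt( ε(A,B) · ∑_{x∈Ω} |g(x) − f(x)|² ), where ε(A,B) = 2·P(A≠B) − P(A≠A') − P(B≠B') is the discrete energy distance (A', B' i.i.d. copies). -/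
open MeasureTheory ProbabilityTheory

lemma neq_prob {Ω₀ Ω : Type*} [MeasurableSpace Ω₀] [Fintype Ω]
    [MeasurableSpace Ω] [MeasurableSingletonClass Ω]
    (μ : Measure Ω₀) [IsProbabilityMeasure μ] (X Y : Ω₀ → Ω)
    (hX : Measurable X) (hY : Measurable Y) (h : IndepFun X Y μ) :
    (μ {ω | X ω ≠ Y ω}).toReal
      = 1 - ∑ x, (μ.map X {x}).toReal * (μ.map Y {x}).toReal := by
  have hset : {ω | X ω = Y ω} = ⋃ x ∈ (Finset.univ : Finset Ω), (X ⁻¹' {x} ∩ Y ⁻¹' {x}) := by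
    ext ω
    simp only [Set.mem_setOf_eq, Finset.mem_univ, Set.iUnion_true, Set.mem_iUnion,
      Set.mem_inter_iff, Set.mem_preimage, Set.mem_singleton_iff]
    exact ⟨fun hxy => ⟨X ω, rfl, hxy.symm⟩, fun ⟨x, hx, hy⟩ => hx.trans hy.symm⟩
  have hmeas : ∀ x : Ω, MeasurableSet (X ⁻¹' {x} ∩ Y ⁻¹' {x}) := fun x =>
    (hX (measurableSet_singleton x)).inter (hY (measurableSet_singleton x))
  have hdisj : Set.PairwiseDisjoint (↑(Finset.univ : Finset Ω))
      (fun x => X ⁻¹' {x} ∩ Y ⁻¹' {x}) := by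
    intro a _ b _ hab
    refine Set.disjoint_left.mpr fun ω hωa hωb => hab ?_
    exact hωa.1.symm.trans hωb.1
  have key : μ {ω | X ω = Y ω} = ∑ x, (μ.map X {x}) * (μ.map Y {x}) := by
    rw [hset, measure_biUnion_finset hdisj (fun x _ => hmeas x)]
    refine Finset.sum_congr rfl fun x _ => ?_
    rw [h.measure_inter_preimage_eq_mul _ _ (measurableSet_singleton x) (measurableSet_singleton x),
      Measure.map_apply hX (measurableSet_singleton x),
      Measure.map_apply hY (measurableSet_singleton x)]
  have hms : MeasurableSet {ω | X ω = Y ω} := by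
    rw [hset]; exact (Finset.univ : Finset Ω).measurableSet_biUnion (fun x _ => hmeas x)
  have hcompl : {ω | X ω ≠ Y ω} = {ω | X ω = Y ω}ᶜ := rfl
  rw [hcompl, prob_compl_eq_one_sub hms, key,
    ENNReal.toReal_sub_of_le (by rw [← key]; exact prob_le_one) ENNReal.one_ne_top,
    ENNReal.toReal_one, ENNReal.toReal_sum (fun x _ => ENNReal.mul_ne_top
      (measure_ne_top _ _) (measure_ne_top _ _))]
  simp [ENNReal.toReal_mul]

lemma exp_sum {Ω₀ Ω : Type*} [MeasurableSpace Ω₀] [Fintype Ω]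
    [MeasurableSpace Ω] [MeasurableSingletonClass Ω]
    (μ : Measure Ω₀) [IsProbabilityMeasure μ] (X : Ω₀ → Ω)
    (hX : Measurable X) (h : Ω → ℝ) :
    ∫ ω, h (X ω) ∂μ = ∑ x, (μ.map X {x}).toReal * h x := by
  haveI : IsProbabilityMeasure (μ.map X) := Measure.isProbabilityMeasure_map hX.aemeasurable
  rw [← integral_map hX.aemeasurable ((measurable_of_countable h).aestronglyMeasurable),
    integral_fintype (Integrable.of_finite)]
  simp [smul_eq_mul, Measure.real]

/-- For mutually independent `A, B, A', B'` on a finite set `Ω` with `A' ~ A`,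
`B' ~ B`, and `g, f : Ω → [0,1]`:
`E[|g(A) − f(A)|] − E[|g(B) − f(B)|] ≤ sqrt(ε(A,B) · ∑_x |g x − f x|²)`,
where `ε(A,B) = 2·P(A≠B) − P(A≠A') − P(B≠B')`. -/
theorem stmt_8 {Ω₀ Ω : Type*} [MeasurableSpace Ω₀] [Fintype Ω]
    [MeasurableSpace Ω] [MeasurableSingletonClass Ω]
    (μ : Measure Ω₀) [IsProbabilityMeasure μ]
    (A B A' B' : Ω₀ → Ω)
    (hA : Measurable A) (hB : Measurable B) (hA' : Measurable A') (hB' : Measurable B')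
    (hindep : iIndepFun (m := fun _ => ‹MeasurableSpace Ω›) ![A, B, A', B'] μ)
    (hAA' : Measure.map A' μ = Measure.map A μ)
    (hBB' : Measure.map B' μ = Measure.map B μ)
    (g f : Ω → ℝ)
    (hg : ∀ x, g x ∈ Set.Icc (0 : ℝ) 1) (hf : ∀ x, f x ∈ Set.Icc (0 : ℝ) 1) :
    (∫ ω, |g (A ω) - f (A ω)| ∂μ) - ∫ ω, |g (B ω) - f (B ω)| ∂μ
      ≤ Real.sqrt ((2 * (μ {ω | A ω ≠ B ω}).toReal - (μ {ω | A ω ≠ A' ω}).toReal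
          - (μ {ω | B ω ≠ B' ω}).toReal) * ∑ x, |g x - f x| ^ 2) := by
  set p : Ω → ℝ := fun x => (μ.map A {x}).toReal with hp
  set q : Ω → ℝ := fun x => (μ.map B {x}).toReal with hq
  set h : Ω → ℝ := fun x => |g x - f x| with hh
  have hiAB : IndepFun A B μ := by
    have := hindep.indepFun (i := 0) (j := 1) (by decide)
    simpa using this
  have hiAA' : IndepFun A A' μ := by
    have := hindep.indepFun (i := 0) (j := 2) (by decide)
    simpa using this
  have hiBB' : IndepFun B B' μ := by
    have := hindep.indepFun (i := 1) (j := 3) (by decide)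
    simpa using this
  have hAB : (μ {ω | A ω ≠ B ω}).toReal = 1 - ∑ x, p x * q x :=
    neq_prob μ A B hA hB hiAB
  have hAA'' : (μ {ω | A ω ≠ A' ω}).toReal = 1 - ∑ x, p x * p x := by
    rw [neq_prob μ A A' hA hA' hiAA', hAA']
  have hBB'' : (μ {ω | B ω ≠ B' ω}).toReal = 1 - ∑ x, q x * q x := by
    rw [neq_prob μ B B' hB hB' hiBB', hBB']
  have hEA : ∫ ω, |g (A ω) - f (A ω)| ∂μ = ∑ x, p x * h x := exp_sum μ A hA h
  have hEB : ∫ ω, |g (B ω) - f (B ω)| ∂μ = ∑ x, q x * h x := exp_sum μ B hB h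
  have heps : 2 * (μ {ω | A ω ≠ B ω}).toReal - (μ {ω | A ω ≠ A' ω}).toReal
      - (μ {ω | B ω ≠ B' ω}).toReal = ∑ x, (p x - q x) ^ 2 := by
    rw [hAB, hAA'', hBB'']
    have : ∑ x, (p x - q x) ^ 2
        = ∑ x, p x * p x + ∑ x, q x * q x - 2 * ∑ x, p x * q x := by
      rw [Finset.mul_sum, ← Finset.sum_add_distrib, ← Finset.sum_sub_distrib]
      exact Finset.sum_congr rfl fun x _ => by ring
    rw [this]; ring
  rw [hEA, hEB, heps, ← Finset.sum_sub_distrib]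
  have hsum : ∑ x, (p x * h x - q x * h x) = ∑ x, (p x - q x) * h x :=
    Finset.sum_congr rfl fun x _ => by ring
  rw [hsum]
  have hCS : (∑ x, (p x - q x) * h x) ^ 2
      ≤ (∑ x, (p x - q x) ^ 2) * ∑ x, h x ^ 2 :=
    Finset.sum_mul_sq_le_sq_mul_sq _ _ _
  have hh2 : ∑ x, h x ^ 2 = ∑ x, |g x - f x| ^ 2 := rfl
  calc ∑ x, (p x - q x) * h x
      ≤ |∑ x, (p x - q x) * h x| := le_abs_self _
    _ = Real.sqrt ((∑ x, (p x - q x) * h x) ^ 2) := (Real.sqrt_sq_eq_abs _).symm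
    _ ≤ Real.sqrt ((∑ x, (p x - q x) ^ 2) * ∑ x, |g x - f x| ^ 2) := by
        rw [← hh2]; exact Real.sqrt_le_sqrt hCS
end

section
/- Adaptation bound: let A and B be independent random variables on a finite set Ω, let S, S' be random variables with values in [0,1], and let f, g : Ω → [0,1]. Then E[|S − f(A)|] ≤ E[|S − g(A)|] + E[|g(B) − S'|] + E[|S' − f(B)|] + sqrt( ε(A,B) · ∑_{x∈Ω} |g(x) − f(x)|² ), where ε(A,B) is the discrete energy distance. -/
open MeasureTheory ProbabilityTheory


lemma eq_prob_aux {Ω₀ Ω : Type*} [MeasurableSpace Ω₀] [Fintype Ω] [MeasurableSpace Ω]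
    [MeasurableSingletonClass Ω] (μ : Measure Ω₀) [IsProbabilityMeasure μ]
    (X Y : Ω₀ → Ω) (hX : Measurable X) (hY : Measurable Y) (hI : IndepFun X Y μ) :
    (μ {ω | X ω ≠ Y ω}).toReal
      = 1 - ∑ x, (μ (X ⁻¹' {x})).toReal * (μ (Y ⁻¹' {x})).toReal := by
  classical
  have hset : {ω | X ω = Y ω} = ⋃ x, X ⁻¹' {x} ∩ Y ⁻¹' {x} := by
    ext ω
    simp only [Set.mem_setOf_eq, Set.mem_iUnion, Set.mem_inter_iff, Set.mem_preimage,
      Set.mem_singleton_iff]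
    constructor
    · intro h; exact ⟨Y ω, h, rfl⟩
    · rintro ⟨x, h1, h2⟩; rw [h1, h2]
  have hmeas : MeasurableSet {ω | X ω = Y ω} := by
    rw [hset]
    exact MeasurableSet.iUnion fun x =>
      (hX (measurableSet_singleton x)).inter (hY (measurableSet_singleton x))
  have hdisj : Pairwise (Function.onFun Disjoint fun x => X ⁻¹' {x} ∩ Y ⁻¹' {x}) := by
    intro a b hab
    refine Set.disjoint_left.2 ?_
    rintro ω ⟨h1, _⟩ ⟨h2, _⟩
    exact hab (h1.symm.trans h2)
  have hcompl : {ω | X ω ≠ Y ω} = {ω | X ω = Y ω}ᶜ := rfl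
  have hμeq : (μ {ω | X ω = Y ω}).toReal
      = ∑ x, (μ (X ⁻¹' {x})).toReal * (μ (Y ⁻¹' {x})).toReal := by
    rw [hset, measure_iUnion hdisj fun x =>
      (hX (measurableSet_singleton x)).inter (hY (measurableSet_singleton x)),
      tsum_fintype, ENNReal.toReal_sum (fun x _ => measure_ne_top μ _)]
    refine Finset.sum_congr rfl fun x _ => ?_
    rw [hI.measure_inter_preimage_eq_mul _ _ (measurableSet_singleton x)
      (measurableSet_singleton x), ENNReal.toReal_mul]
  rw [hcompl, prob_compl_eq_one_sub hmeas,
    ENNReal.toReal_sub_of_le (prob_le_one) (by simp), ENNReal.toReal_one, hμeq]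


/-- Adaptation bound: for independent `A, B` on a finite set `Ω` (with i.i.d. copies
`A', B'`, all mutually independent), `[0,1]`-valued random variables `S` (independent
of `A`) and `S'` (independent of `B`), and functions `f, g : Ω → [0,1]`:
`E[|S − f(A)|] ≤ E[|S − g(A)|] + E[|g(B) − S'|] + E[|S' − f(B)|]
  + sqrt(ε(A,B) · ∑_x |g x − f x|²)`. -/
theorem stmt_9 {Ω₀ Ω : Type*} [MeasurableSpace Ω₀] [Fintype Ω]
    [MeasurableSpace Ω] [MeasurableSingletonClass Ω]
    (μ : Measure Ω₀) [IsProbabilityMeasure μ]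
    (A B A' B' : Ω₀ → Ω)
    (hA : Measurable A) (hB : Measurable B) (hA' : Measurable A') (hB' : Measurable B')
    (hindep : iIndepFun ![A, B, A', B'] μ)
    (hAA' : Measure.map A' μ = Measure.map A μ)
    (hBB' : Measure.map B' μ = Measure.map B μ)
    (S S' : Ω₀ → ℝ) (hS : Measurable S) (hS' : Measurable S')
    (hS01 : ∀ ω, S ω ∈ Set.Icc (0 : ℝ) 1) (hS'01 : ∀ ω, S' ω ∈ Set.Icc (0 : ℝ) 1)
    (hSA : IndepFun S A μ) (hS'B : IndepFun S' B μ)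
    (f g : Ω → ℝ)
    (hf : ∀ x, f x ∈ Set.Icc (0 : ℝ) 1) (hg : ∀ x, g x ∈ Set.Icc (0 : ℝ) 1) :
    (∫ ω, |S ω - f (A ω)| ∂μ)
      ≤ (∫ ω, |S ω - g (A ω)| ∂μ) + (∫ ω, |g (B ω) - S' ω| ∂μ)
        + (∫ ω, |S' ω - f (B ω)| ∂μ)
        + Real.sqrt ((2 * (μ {ω | A ω ≠ B ω}).toReal - (μ {ω | A ω ≠ A' ω}).toReal
            - (μ {ω | B ω ≠ B' ω}).toReal) * ∑ x, |g x - f x| ^ 2) := by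
  classical
  set p : Ω → ℝ := fun x => (μ (A ⁻¹' {x})).toReal with hp
  set q : Ω → ℝ := fun x => (μ (B ⁻¹' {x})).toReal with hq
  set h : Ω → ℝ := fun x => |g x - f x| with hh
  -- measurability of functions out of Ω
  have hmf : ∀ F : Ω → ℝ, Measurable F := fun F => measurable_of_countable F
  -- integrability helper
  have int_of : ∀ F : Ω₀ → ℝ, Measurable F → (∀ ω, |F ω| ≤ 2) → Integrable F μ := by
    intro F hF hb
    exact (integrable_const (2:ℝ)).mono' hF.aestronglyMeasurable
      (ae_of_all μ (by simpa using hb))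
  have habs : ∀ a b : ℝ, a ∈ Set.Icc (0:ℝ) 1 → b ∈ Set.Icc (0:ℝ) 1 → |a - b| ≤ 2 := by
    intro a b ha hb
    rw [abs_sub_le_iff]
    constructor <;> linarith [ha.1, ha.2, hb.1, hb.2]
  have iSfA : Integrable (fun ω => |S ω - f (A ω)|) μ :=
    int_of _ (hS.sub ((hmf f).comp hA)).abs
      (fun ω => by rw [abs_abs]; exact habs _ _ (hS01 ω) (hf _))
  have iSgA : Integrable (fun ω => |S ω - g (A ω)|) μ :=
    int_of _ (hS.sub ((hmf g).comp hA)).abs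
      (fun ω => by rw [abs_abs]; exact habs _ _ (hS01 ω) (hg _))
  have igBS' : Integrable (fun ω => |g (B ω) - S' ω|) μ :=
    int_of _ (((hmf g).comp hB).sub hS').abs
      (fun ω => by rw [abs_abs]; exact habs _ _ (hg _) (hS'01 ω))
  have iS'fB : Integrable (fun ω => |S' ω - f (B ω)|) μ :=
    int_of _ (hS'.sub ((hmf f).comp hB)).abs
      (fun ω => by rw [abs_abs]; exact habs _ _ (hS'01 ω) (hf _))
  have ihA : Integrable (fun ω => h (A ω)) μ :=
    int_of _ ((hmf h).comp hA)
      (fun ω => by rw [abs_abs]; exact habs _ _ (hg _) (hf _))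
  have ihB : Integrable (fun ω => h (B ω)) μ :=
    int_of _ ((hmf h).comp hB)
      (fun ω => by rw [abs_abs]; exact habs _ _ (hg _) (hf _))
  -- expected values of h ∘ A and h ∘ B as finite sums
  have EhA : (∫ ω, h (A ω) ∂μ) = ∑ x, p x * h x := by
    rw [← integral_map hA.aemeasurable (hmf h).aestronglyMeasurable,
      integral_fintype (by refine Integrable.of_finite)]
    refine Finset.sum_congr rfl fun x _ => ?_
    rw [Measure.real_def, Measure.map_apply hA (measurableSet_singleton x)]
    simp [hp, smul_eq_mul]
  have EhB : (∫ ω, h (B ω) ∂μ) = ∑ x, q x * h x := by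
    rw [← integral_map hB.aemeasurable (hmf h).aestronglyMeasurable,
      integral_fintype (by refine Integrable.of_finite)]
    refine Finset.sum_congr rfl fun x _ => ?_
    rw [Measure.real_def, Measure.map_apply hB (measurableSet_singleton x)]
    simp [hq, smul_eq_mul]
  -- probabilities of equality
  have hAB : IndepFun A B μ := by
    have := hindep.indepFun (i := 0) (j := 1) (by decide)
    simpa using this
  have hAA'i : IndepFun A A' μ := by
    have := hindep.indepFun (i := 0) (j := 2) (by decide)
    simpa using this
  have hBB'i : IndepFun B B' μ := by
    have := hindep.indepFun (i := 1) (j := 3) (by decide)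
    simpa using this
  have hA'x : ∀ x : Ω, (μ (A' ⁻¹' {x})).toReal = p x := by
    intro x
    rw [hp]
    rw [← Measure.map_apply hA' (measurableSet_singleton x), hAA',
      Measure.map_apply hA (measurableSet_singleton x)]
  have hB'x : ∀ x : Ω, (μ (B' ⁻¹' {x})).toReal = q x := by
    intro x
    rw [hq]
    rw [← Measure.map_apply hB' (measurableSet_singleton x), hBB',
      Measure.map_apply hB (measurableSet_singleton x)]
  have e1 : (μ {ω | A ω ≠ B ω}).toReal = 1 - ∑ x, p x * q x :=
    eq_prob_aux μ A B hA hB hAB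
  have e2 : (μ {ω | A ω ≠ A' ω}).toReal = 1 - ∑ x, p x * p x := by
    rw [eq_prob_aux μ A A' hA hA' hAA'i]
    congr 1
    exact Finset.sum_congr rfl fun x _ => by rw [hA'x x]
  have e3 : (μ {ω | B ω ≠ B' ω}).toReal = 1 - ∑ x, q x * q x := by
    rw [eq_prob_aux μ B B' hB hB' hBB'i]
    congr 1
    exact Finset.sum_congr rfl fun x _ => by rw [hB'x x]
  -- the energy distance equals the squared ℓ² distance of the pmfs
  have eps_eq : 2 * (μ {ω | A ω ≠ B ω}).toReal - (μ {ω | A ω ≠ A' ω}).toReal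
      - (μ {ω | B ω ≠ B' ω}).toReal = ∑ x, (p x - q x) ^ 2 := by
    rw [e1, e2, e3]
    have : ∑ x, (p x - q x) ^ 2
        = (∑ x, p x * p x) + (∑ x, q x * q x) - 2 * ∑ x, p x * q x := by
      rw [Finset.mul_sum, ← Finset.sum_add_distrib, ← Finset.sum_sub_distrib]
      exact Finset.sum_congr rfl fun x _ => by ring
    rw [this]; ring
  -- Cauchy–Schwarz step
  have hsum_eq : ∑ x, |g x - f x| ^ 2 = ∑ x, h x ^ 2 := rfl
  have key : (∫ ω, h (A ω) ∂μ) - (∫ ω, h (B ω) ∂μ)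
      ≤ Real.sqrt ((∑ x, (p x - q x) ^ 2) * ∑ x, h x ^ 2) := by
    rw [EhA, EhB, ← Finset.sum_sub_distrib]
    have hL : ∑ x, (p x * h x - q x * h x) = ∑ x, (p x - q x) * h x :=
      Finset.sum_congr rfl fun x _ => by ring
    rw [hL]
    set L := ∑ x, (p x - q x) * h x with hLdef
    have h1 : L ≤ |L| := le_abs_self L
    have h2 : |L| = Real.sqrt (L ^ 2) := (Real.sqrt_sq_eq_abs L).symm
    have h3 : L ^ 2 ≤ (∑ x, (p x - q x) ^ 2) * ∑ x, h x ^ 2 :=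
      Finset.sum_mul_sq_le_sq_mul_sq _ _ _
    calc L ≤ |L| := h1
      _ = Real.sqrt (L ^ 2) := h2
      _ ≤ _ := Real.sqrt_le_sqrt h3
  -- triangle inequality steps
  have tri1 : (∫ ω, |S ω - f (A ω)| ∂μ)
      ≤ (∫ ω, |S ω - g (A ω)| ∂μ) + ∫ ω, h (A ω) ∂μ := by
    rw [← integral_add iSgA ihA]
    refine integral_mono iSfA (iSgA.add ihA) fun ω => ?_
    have := abs_sub_le (S ω) (g (A ω)) (f (A ω))
    simpa [hh, abs_sub_comm] using this
  have tri2 : (∫ ω, h (B ω) ∂μ)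
      ≤ (∫ ω, |g (B ω) - S' ω| ∂μ) + ∫ ω, |S' ω - f (B ω)| ∂μ := by
    rw [← integral_add igBS' iS'fB]
    refine integral_mono ihB (igBS'.add iS'fB) fun ω => ?_
    have := abs_sub_le (g (B ω)) (S' ω) (f (B ω))
    simpa [hh] using this
  rw [eps_eq, hsum_eq]
  linarith [key, tri1, tri2]
end

section
/- Energy distance via characteristic functions (finite case, d = 1): let A and B be independent random variables on a finite set Ω ⊂ ℝ with i.i.d. copies A', B'. Then lim_{τ→∞} (1/(2τ)) ∫_{−τ}^{τ} |φ_A(t) − φ_B(t)|² dt = 2·P(A≠B) − P(A≠A') − P(B≠B'), where φ_X(t) = E[e^{itX}]. -/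
open MeasureTheory ProbabilityTheory Filter

lemma helper_integral_comp_finite {Ω₀ : Type*} [MeasurableSpace Ω₀] (μ : Measure Ω₀)
    [IsProbabilityMeasure μ] (X : Ω₀ → ℝ) (hX : Measurable X) (S : Finset ℝ)
    (hS : ∀ ω, X ω ∈ S) (g : ℝ → ℂ) :
    ∫ ω, g (X ω) ∂μ = ∑ x ∈ S, (μ (X ⁻¹' {x})).toReal • g x := by
  have h1 : ∀ ω, g (X ω) = ∑ x ∈ S, Set.indicator (X ⁻¹' {x}) (fun _ => g x) ω := by
    classical
    intro ω
    rw [Finset.sum_eq_single (X ω)]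
    · simp [Set.indicator_apply]
    · intro x hx hne
      rw [Set.indicator_apply]
      simp only [Set.mem_preimage, Set.mem_singleton_iff]
      rw [if_neg (fun h => hne h.symm)]
    · intro h; exact absurd (hS ω) h
  calc ∫ ω, g (X ω) ∂μ = ∫ ω, ∑ x ∈ S, Set.indicator (X ⁻¹' {x}) (fun _ => g x) ω ∂μ := by
        exact integral_congr_ae (Filter.Eventually.of_forall h1)
    _ = ∑ x ∈ S, ∫ ω, Set.indicator (X ⁻¹' {x}) (fun _ => g x) ω ∂μ := by
        refine integral_finset_sum _ fun x _ => ?_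
        exact (integrable_const (g x)).indicator (hX (measurableSet_singleton x))
    _ = ∑ x ∈ S, (μ (X ⁻¹' {x})).toReal • g x := by
        refine Finset.sum_congr rfl fun x _ => ?_
        rw [integral_indicator_const _ (hX (measurableSet_singleton x))]
        rfl

lemma helper_eq_prob {Ω₀ : Type*} [MeasurableSpace Ω₀] (μ : Measure Ω₀)
    [IsProbabilityMeasure μ] (X Y : Ω₀ → ℝ) (hX : Measurable X) (hY : Measurable Y)
    (hind : IndepFun X Y μ) (S : Finset ℝ) (hS : ∀ ω, X ω ∈ S) :
    (μ {ω | X ω = Y ω}).toReal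
      = ∑ x ∈ S, (μ (X ⁻¹' {x})).toReal * (μ (Y ⁻¹' {x})).toReal := by
  have hset : {ω | X ω = Y ω} = ⋃ x ∈ S, (X ⁻¹' {x} ∩ Y ⁻¹' {x}) := by
    ext ω
    simp only [Set.mem_setOf_eq, Set.mem_iUnion, Set.mem_inter_iff, Set.mem_preimage,
      Set.mem_singleton_iff]
    constructor
    · intro h; exact ⟨X ω, hS ω, rfl, h.symm⟩
    · rintro ⟨x, _, h1, h2⟩; rw [h1, h2]
  rw [hset, measure_biUnion_finset]
  · rw [ENNReal.toReal_sum (fun x _ => measure_ne_top μ _)]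
    refine Finset.sum_congr rfl fun x _ => ?_
    rw [hind.measure_inter_preimage_eq_mul _ _ (measurableSet_singleton x)
      (measurableSet_singleton x), ENNReal.toReal_mul]
  · intro x _ y _ hxy
    refine Set.disjoint_left.2 fun ω hω hω' => hxy ?_
    have := hω.1; have := hω'.1
    simp only [Set.mem_preimage, Set.mem_singleton_iff] at *
    rw [← hω.1, ← hω'.1]
  · exact fun x _ => (hX (measurableSet_singleton x)).inter (hY (measurableSet_singleton x))

lemma helper_norm_sq_sum (S : Finset ℝ) (c : ℝ → ℝ) (t : ℝ) :
    ‖∑ x ∈ S, (c x : ℂ) * Complex.exp (Complex.I * t * x)‖ ^ 2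
      = ∑ x ∈ S, ∑ y ∈ S, c x * c y * Real.cos (t * (x - y)) := by
  have hz : ∀ z : ℂ, ‖z‖ ^ 2 = (z * (starRingEnd ℂ) z).re := by
    intro z; rw [Complex.mul_conj, Complex.ofReal_re, ← Complex.sq_norm]
  rw [hz, map_sum, Finset.sum_mul_sum, Complex.re_sum]
  refine Finset.sum_congr rfl fun x _ => ?_
  rw [Complex.re_sum]
  refine Finset.sum_congr rfl fun y _ => ?_
  have : (c x : ℂ) * Complex.exp (Complex.I * t * x) *
      ((starRingEnd ℂ) ((c y : ℂ) * Complex.exp (Complex.I * t * y)))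
      = ((c x * c y : ℝ) : ℂ) * Complex.exp ((t * (x - y) : ℝ) * Complex.I) := by
    rw [map_mul, ← Complex.exp_conj]
    simp only [map_mul, Complex.conj_I, Complex.conj_ofReal]
    rw [show (↑(c x):ℂ) * Complex.exp (Complex.I * t * x) * (↑(c y) * Complex.exp (-Complex.I * t * y))
      = (↑(c x) * ↑(c y)) * (Complex.exp (Complex.I * t * x) * Complex.exp (-Complex.I * t * y)) from by ring,
      ← Complex.exp_add]
    push_cast
    ring_nf
  rw [this]
  rw [show (((c x * c y : ℝ)) : ℂ) * Complex.exp ((t * (x - y) : ℝ) * Complex.I)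
    = (c x * c y : ℝ) • Complex.exp ((t * (x - y) : ℝ) * Complex.I) from Complex.real_smul.symm]
  rw [Complex.smul_re, Complex.exp_ofReal_mul_I_re, smul_eq_mul]

lemma helper_cos_avg (d : ℝ) :
    Tendsto (fun τ : ℝ => (1/(2*τ)) * ∫ t in (-τ)..τ, Real.cos (t * d)) atTop
      (nhds (if d = 0 then 1 else 0)) := by
  by_cases hd : d = 0
  · simp only [hd, mul_zero, Real.cos_zero, if_pos rfl, if_true]
    refine Tendsto.congr' ?_ tendsto_const_nhds
    filter_upwards [eventually_gt_atTop (0:ℝ)] with τ hτ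
    rw [intervalIntegral.integral_const, smul_eq_mul, mul_one, sub_neg_eq_add]
    field_simp
    ring
  · rw [if_neg hd]
    have key : ∀ τ : ℝ, (1/(2*τ)) * ∫ t in (-τ)..τ, Real.cos (t * d)
        = (1/(2*τ)) * (d⁻¹ * (2 * Real.sin (τ*d))) := by
      intro τ
      rw [intervalIntegral.integral_comp_mul_right Real.cos hd, integral_cos, smul_eq_mul,
        neg_mul, Real.sin_neg, sub_neg_eq_add, ← two_mul]
    refine squeeze_zero_norm' (a := fun τ => (τ * |d|)⁻¹) ?_ ?_
    · filter_upwards [eventually_gt_atTop (0:ℝ)] with τ hτ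
      rw [key τ]
      rw [Real.norm_eq_abs, abs_mul, abs_mul, abs_mul]
      have h1 : |1/(2*τ)| = 1/(2*τ) := abs_of_pos (by positivity)
      have h2 : |(2:ℝ)| = 2 := by norm_num
      rw [h1, h2, abs_inv]
      calc 1/(2*τ) * (|d|⁻¹ * (2 * |Real.sin (τ*d)|))
          ≤ 1/(2*τ) * (|d|⁻¹ * (2 * 1)) := by
            gcongr
            exact Real.abs_sin_le_one _
        _ = (τ * |d|)⁻¹ := by
            rw [mul_inv]
            field_simp
    · refine Tendsto.inv_tendsto_atTop ?_
      exact Tendsto.atTop_mul_const (abs_pos.2 hd) tendsto_id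

/-- Energy distance via characteristic functions (finite case, `d = 1`): for
mutually independent real-valued random variables `A, B, A', B'` taking finitely
many values, with `A' ~ A` and `B' ~ B`,
`lim_{τ→∞} (1/(2τ)) ∫_{−τ}^{τ} |φ_A(t) − φ_B(t)|² dt
  = 2·P(A≠B) − P(A≠A') − P(B≠B')`. -/
theorem stmt_15 {Ω₀ : Type*} [MeasurableSpace Ω₀]
    (μ : Measure Ω₀) [IsProbabilityMeasure μ]
    (A B A' B' : Ω₀ → ℝ)
    (hA : Measurable A) (hB : Measurable B) (hA' : Measurable A') (hB' : Measurable B')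
    (hfinA : (Set.range A).Finite) (hfinB : (Set.range B).Finite)
    (hindep : iIndepFun ![A, B, A', B'] μ)
    (hAA' : Measure.map A' μ = Measure.map A μ)
    (hBB' : Measure.map B' μ = Measure.map B μ) :
    Tendsto (fun τ : ℝ => (1 / (2 * τ)) *
        ∫ t in (-τ)..τ,
          ‖(∫ ω, Complex.exp (Complex.I * t * A ω) ∂μ)
              - ∫ ω, Complex.exp (Complex.I * t * B ω) ∂μ‖ ^ 2)
      atTop
      (nhds (2 * (μ {ω | A ω ≠ B ω}).toReal - (μ {ω | A ω ≠ A' ω}).toReal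
        - (μ {ω | B ω ≠ B' ω}).toReal)) := by
  classical
  set S : Finset ℝ := (hfinA.union hfinB).toFinset with hSdef
  have hAS : ∀ ω, A ω ∈ S := fun ω => by
    rw [hSdef, Set.Finite.mem_toFinset]; exact Or.inl ⟨ω, rfl⟩
  have hBS : ∀ ω, B ω ∈ S := fun ω => by
    rw [hSdef, Set.Finite.mem_toFinset]; exact Or.inr ⟨ω, rfl⟩
  set a : ℝ → ℝ := fun x => (μ (A ⁻¹' {x})).toReal with ha
  set b : ℝ → ℝ := fun x => (μ (B ⁻¹' {x})).toReal with hb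
  -- pointwise expansion of the integrand
  have hint : ∀ t : ℝ, ‖(∫ ω, Complex.exp (Complex.I * t * A ω) ∂μ)
        - ∫ ω, Complex.exp (Complex.I * t * B ω) ∂μ‖ ^ 2
      = ∑ p ∈ S ×ˢ S, (a p.1 - b p.1) * (a p.2 - b p.2) * Real.cos (t * (p.1 - p.2)) := by
    intro t
    rw [helper_integral_comp_finite μ A hA S hAS (fun x => Complex.exp (Complex.I * t * x)),
      helper_integral_comp_finite μ B hB S hBS (fun x => Complex.exp (Complex.I * t * x)),
      ← Finset.sum_sub_distrib]
    have h3 : ∀ x ∈ S, (μ (A ⁻¹' {x})).toReal • Complex.exp (Complex.I * t * x)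
        - (μ (B ⁻¹' {x})).toReal • Complex.exp (Complex.I * t * x)
        = ((a x - b x : ℝ) : ℂ) * Complex.exp (Complex.I * t * x) := by
      intro x _
      rw [← sub_smul, Complex.real_smul]
    rw [Finset.sum_congr rfl h3, helper_norm_sq_sum S (fun x => a x - b x) t,
      ← Finset.sum_product']
  -- rewrite the averaged integral as a finite sum of averages
  have hF : ∀ τ : ℝ, (1 / (2 * τ)) * ∫ t in (-τ)..τ,
        ‖(∫ ω, Complex.exp (Complex.I * t * A ω) ∂μ)
            - ∫ ω, Complex.exp (Complex.I * t * B ω) ∂μ‖ ^ 2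
      = ∑ p ∈ S ×ˢ S, (a p.1 - b p.1) * (a p.2 - b p.2) *
          ((1 / (2 * τ)) * ∫ t in (-τ)..τ, Real.cos (t * (p.1 - p.2))) := by
    intro τ
    rw [intervalIntegral.integral_congr (fun t _ => hint t)]
    rw [intervalIntegral.integral_finset_sum (fun p _ =>
      Continuous.intervalIntegrable (by continuity) _ _)]
    rw [Finset.mul_sum]
    exact Finset.sum_congr rfl fun p _ => by
      rw [intervalIntegral.integral_const_mul]; ring
  have hlim : Tendsto (fun τ : ℝ => ∑ p ∈ S ×ˢ S, (a p.1 - b p.1) * (a p.2 - b p.2) *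
        ((1 / (2 * τ)) * ∫ t in (-τ)..τ, Real.cos (t * (p.1 - p.2)))) atTop
      (nhds (∑ p ∈ S ×ˢ S, (a p.1 - b p.1) * (a p.2 - b p.2) *
        (if p.1 - p.2 = 0 then 1 else 0))) :=
    tendsto_finset_sum _ fun p _ => (helper_cos_avg (p.1 - p.2)).const_mul _
  -- value of the limit
  have hval : (∑ p ∈ S ×ˢ S, (a p.1 - b p.1) * (a p.2 - b p.2) *
        (if p.1 - p.2 = 0 then 1 else 0))
      = ∑ x ∈ S, (a x - b x) * (a x - b x) := by
    rw [Finset.sum_product]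
    refine Finset.sum_congr rfl fun x _ => ?_
    rw [Finset.sum_eq_single x]
    · simp
    · intro y _ hne
      rw [if_neg (fun h => hne (sub_eq_zero.1 h).symm), mul_zero]
    · intro h; exact absurd ‹x ∈ S› h
  -- independence facts
  have hiAB : IndepFun A B μ := by
    have h := hindep.indepFun (i := 0) (j := 1) (by decide)
    simpa using h
  have hiAA' : IndepFun A A' μ := by
    have h := hindep.indepFun (i := 0) (j := 2) (by decide)
    simpa using h
  have hiBB' : IndepFun B B' μ := by
    have h := hindep.indepFun (i := 1) (j := 3) (by decide)
    simpa using h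
  have hA'x : ∀ x : ℝ, μ (A' ⁻¹' {x}) = μ (A ⁻¹' {x}) := by
    intro x
    rw [← Measure.map_apply hA' (measurableSet_singleton x), hAA',
      Measure.map_apply hA (measurableSet_singleton x)]
  have hB'x : ∀ x : ℝ, μ (B' ⁻¹' {x}) = μ (B ⁻¹' {x}) := by
    intro x
    rw [← Measure.map_apply hB' (measurableSet_singleton x), hBB',
      Measure.map_apply hB (measurableSet_singleton x)]
  have hPAB : (μ {ω | A ω = B ω}).toReal = ∑ x ∈ S, a x * b x :=
    helper_eq_prob μ A B hA hB hiAB S hAS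
  have hPAA : (μ {ω | A ω = A' ω}).toReal = ∑ x ∈ S, a x * a x := by
    rw [helper_eq_prob μ A A' hA hA' hiAA' S hAS]
    exact Finset.sum_congr rfl fun x _ => by rw [hA'x x]
  have hPBB : (μ {ω | B ω = B' ω}).toReal = ∑ x ∈ S, b x * b x := by
    rw [helper_eq_prob μ B B' hB hB' hiBB' S hBS]
    exact Finset.sum_congr rfl fun x _ => by rw [hB'x x]
  have hcompl : ∀ (X Y : Ω₀ → ℝ), Measurable X → Measurable Y →
      (μ {ω | X ω ≠ Y ω}).toReal = 1 - (μ {ω | X ω = Y ω}).toReal := by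
    intro X Y hX hY
    have hms : MeasurableSet {ω | X ω = Y ω} := measurableSet_eq_fun hX hY
    have : {ω | X ω ≠ Y ω} = {ω | X ω = Y ω}ᶜ := rfl
    rw [this, measure_compl hms (measure_ne_top μ _), measure_univ,
      ENNReal.toReal_sub_of_le prob_le_one ENNReal.one_ne_top, ENNReal.toReal_one]
  -- assemble
  have hkey : 2 * (μ {ω | A ω ≠ B ω}).toReal - (μ {ω | A ω ≠ A' ω}).toReal
      - (μ {ω | B ω ≠ B' ω}).toReal = ∑ x ∈ S, (a x - b x) * (a x - b x) := by
    rw [hcompl A B hA hB, hcompl A A' hA hA', hcompl B B' hB hB', hPAB, hPAA, hPBB]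
    have expand : ∑ x ∈ S, (a x - b x) * (a x - b x)
        = (∑ x ∈ S, a x * a x) + (∑ x ∈ S, b x * b x) - 2 * (∑ x ∈ S, a x * b x) := by
      rw [Finset.mul_sum, ← Finset.sum_add_distrib, ← Finset.sum_sub_distrib]
      exact Finset.sum_congr rfl fun x _ => by ring
    rw [expand]; ring
  rw [hkey, ← hval]
  exact Tendsto.congr (fun τ => (hF τ).symm) hlim
end
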